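/- Let f_k(x) = (8/(π²k²)) exp(−2‖x‖²/k) for x ∈ ℝ^4. Let α, β, γ > 0 satisfy β > α + 4 and 4 + 2γ + α − β < 0. Suppose i, k, n ∈ ℕ and x, z ∈ ℤ^4 satisfy k ≥ n/(log n)^α, ‖x‖ ≤ √n (log n)², i ≤ k/(log n)^β, and ‖z‖ ≤ √i (log n)^γ. Then f_{k−i}(x−z) = f_k(x)(1 + o(1)) as n → ∞, i.e. the ratio f_{k−i}(x−z)/f_k(x) tends to 1 uniformly over all such choices. -/

import Mathlib

open Real Filter

/-- The Gaussian-type kernel `f_k(x) = (8/(π²k²)) exp(−2‖x‖²/k)` on `ℝ⁴`,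
with a real time parameter `k`. -/
noncomputable def gaussKer (k : ℝ) (x : EuclideanSpace ℝ (Fin 4)) : ℝ :=
  8 / (Real.pi ^ 2 * k ^ 2) * Real.exp (-2 * ‖x‖ ^ 2 / k)

lemma gaussKer_ratio_eq (k i : ℝ) (hk : k ≠ 0) (hs : k - i ≠ 0)
    (x z : EuclideanSpace ℝ (Fin 4)) :
    gaussKer (k - i) (x - z) / gaussKer k x
      = (k / (k - i)) ^ 2 *
        Real.exp (2 * ‖x‖ ^ 2 / k - 2 * ‖x - z‖ ^ 2 / (k - i)) := by
  unfold gaussKer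
  have hπ : Real.pi ≠ 0 := Real.pi_ne_zero
  rw [show -2 * ‖x - z‖ ^ 2 / (k - i) = -(2 * ‖x - z‖ ^ 2 / (k - i)) by ring,
      show -2 * ‖x‖ ^ 2 / k = -(2 * ‖x‖ ^ 2 / k) by ring,
      Real.exp_neg, Real.exp_neg, Real.exp_sub]
  have e1 := Real.exp_ne_zero (2 * ‖x - z‖ ^ 2 / (k - i))
  have e2 := Real.exp_ne_zero (2 * ‖x‖ ^ 2 / k)
  field_simp

lemma eventually_rpow_log_le {c : ℝ} (hc : c < 0) {ε : ℝ} (hε : 0 < ε) :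
    ∀ᶠ n : ℕ in atTop, (Real.log n) ^ c ≤ ε := by
  have hlog : Tendsto (fun n : ℕ => Real.log n) atTop atTop :=
    Real.tendsto_log_atTop.comp tendsto_natCast_atTop_atTop
  have h : Tendsto (fun n : ℕ => (Real.log n) ^ c) atTop (nhds 0) := by
    have := (tendsto_rpow_neg_atTop (show 0 < -c by linarith)).comp hlog
    simpa [Function.comp_def] using this
  exact h.eventually (eventually_le_nhds hε)

set_option maxHeartbeats 1600000 in
/-- if `β > α + 4` and `4 + 2γ + α − β < 0`, then uniformly over
`k ≥ n/(log n)^α`, `‖x‖ ≤ √n (log n)²`, `i ≤ k/(log n)^β`, `‖z‖ ≤ √i (log n)^γ`,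
the ratio `f_{k−i}(x−z)/f_k(x)` tends to `1` as `n → ∞`. -/
theorem gaussKer_ratio_tendsto_one
    (α β γ : ℝ) (hα : 0 < α) (hβ : 0 < β) (hγ : 0 < γ)
    (h1 : β > α + 4) (h2 : 4 + 2 * γ + α - β < 0) :
    ∀ ε : ℝ, 0 < ε → ∃ N : ℕ, ∀ (n i k : ℕ),
      N ≤ n →
      ∀ x z : EuclideanSpace ℝ (Fin 4),
        (n : ℝ) / (Real.log n) ^ α ≤ (k : ℝ) →
        ‖x‖ ≤ Real.sqrt n * (Real.log n) ^ 2 →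
        (i : ℝ) ≤ (k : ℝ) / (Real.log n) ^ β →
        ‖z‖ ≤ Real.sqrt i * (Real.log n) ^ γ →
        |gaussKer ((k : ℝ) - (i : ℝ)) (x - z) / gaussKer (k : ℝ) x - 1| ≤ ε := by
  intro ε hε
  have hmin0 : 0 < min (1/2 : ℝ) (ε/4) := lt_min (by norm_num) (by linarith)
  set m : ℝ := min (1/2) (ε/4) / 16 with hm
  have hm0 : 0 < m := div_pos hmin0 (by norm_num)
  have hδb0 : 0 < min (1/2 : ℝ) (ε/24) := lt_min (by norm_num) (by linarith)
  have hc1 : (4:ℝ) + α - β < 0 := by linarith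
  have hc2 : 2 + γ + α/2 - β/2 < 0 := by linarith
  have hc3 : 2*γ - β < 0 := by linarith
  have hc4 : -β < 0 := by linarith
  have hlog : Tendsto (fun n : ℕ => Real.log n) atTop atTop :=
    Real.tendsto_log_atTop.comp tendsto_natCast_atTop_atTop
  have hev := ((eventually_rpow_log_le hc1 hm0).and ((eventually_rpow_log_le hc2 hm0).and
      ((eventually_rpow_log_le hc3 hm0).and ((eventually_rpow_log_le hc4 hδb0).and
      (hlog.eventually_ge_atTop 2)))))
  obtain ⟨N, hN⟩ := eventually_atTop.1 hev
  refine ⟨N, fun n i k hn x z hkk hx hii hz => ?_⟩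
  obtain ⟨hA1, hA2, hA3, hδm, hL2⟩ := hN n hn
  set L := Real.log n with hLdef
  have hL0 : (0:ℝ) < L := by linarith
  have hn0 : (0:ℝ) < (n:ℝ) := by
    rcases Nat.eq_zero_or_pos n with h | h
    · exfalso; rw [h] at hLdef; simp at hLdef; linarith
    · exact_mod_cast h
  set δ : ℝ := L ^ (-β) with hδdef
  have hδ0 : 0 < δ := Real.rpow_pos_of_pos hL0 _
  have hδhalf : δ ≤ 1/2 := hδm.trans (min_le_left _ _)
  have hδε : δ ≤ ε/24 := hδm.trans (min_le_right _ _)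
  have hLα : 0 < L ^ α := Real.rpow_pos_of_pos hL0 _
  have hK0 : (0:ℝ) < (k:ℝ) := lt_of_lt_of_le (div_pos hn0 hLα) hkk
  have hIδ : (i:ℝ) ≤ (k:ℝ) * δ := by
    rw [hδdef, Real.rpow_neg hL0.le, ← div_eq_mul_inv]
    exact hii
  have hI0 : (0:ℝ) ≤ (i:ℝ) := Nat.cast_nonneg i
  have hs2 : (k:ℝ)/2 ≤ (k:ℝ) - i := by
    have hkδ : (k:ℝ)*δ ≤ (k:ℝ)*(1/2) := mul_le_mul_of_nonneg_left hδhalf hK0.le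
    linarith
  have hs0 : (0:ℝ) < (k:ℝ) - i := by linarith
  -- positivity facts for rpow
  have hL4 : (0:ℝ) < L ^ (4:ℝ) := Real.rpow_pos_of_pos hL0 _
  have hL2' : (0:ℝ) < L ^ (2:ℝ) := Real.rpow_pos_of_pos hL0 _
  have hLγ : (0:ℝ) < L ^ γ := Real.rpow_pos_of_pos hL0 _
  have hL2γ : (0:ℝ) < L ^ (2*γ) := Real.rpow_pos_of_pos hL0 _
  have hLβ2 : (0:ℝ) < L ^ (-β/2) := Real.rpow_pos_of_pos hL0 _
  have hLα2 : (0:ℝ) < L ^ (-(α/2)) := Real.rpow_pos_of_pos hL0 _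
  have hsn0 : 0 < Real.sqrt n := Real.sqrt_pos.2 hn0
  have hS0 : 0 < Real.sqrt k := Real.sqrt_pos.2 hK0
  -- bound for ‖x‖
  have hx2 : ‖x‖ ≤ Real.sqrt n * L ^ (2:ℝ) := by
    rwa [show ((2:ℝ)) = ((2:ℕ):ℝ) by norm_num, Real.rpow_natCast]
  have hxn : ‖x‖^2 ≤ (n:ℝ) * L ^ (4:ℝ) := by
    calc ‖x‖^2 ≤ (Real.sqrt n * L^(2:ℝ))^2 :=
          pow_le_pow_left₀ (norm_nonneg _) hx2 2
      _ = (n:ℝ) * L^(4:ℝ) := by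
          rw [mul_pow, Real.sq_sqrt hn0.le, ← Real.rpow_natCast (L^(2:ℝ)) 2,
            ← Real.rpow_mul hL0.le]
          norm_num
  -- bound for ‖z‖
  have hzn : ‖z‖^2 ≤ (i:ℝ) * L ^ (2*γ) := by
    calc ‖z‖^2 ≤ (Real.sqrt i * L^γ)^2 := pow_le_pow_left₀ (norm_nonneg _) hz 2
      _ = (i:ℝ) * L^(2*γ) := by
          rw [mul_pow, Real.sq_sqrt hI0, ← Real.rpow_natCast (L^γ) 2,
            ← Real.rpow_mul hL0.le]
          norm_num [mul_comm]
  have hsqrtδ : Real.sqrt δ = L ^ (-β/2) := by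
    rw [hδdef, Real.sqrt_eq_rpow, ← Real.rpow_mul hL0.le]
    congr 1; ring
  have hsqrti : Real.sqrt i ≤ Real.sqrt k * L ^ (-β/2) := by
    have h1 : Real.sqrt i ≤ Real.sqrt ((k:ℝ) * δ) := Real.sqrt_le_sqrt hIδ
    rwa [Real.sqrt_mul hK0.le, hsqrtδ] at h1
  have hsqrtk : Real.sqrt n * L ^ (-(α/2)) ≤ Real.sqrt k := by
    have h1 : Real.sqrt ((n:ℝ) / L^α) ≤ Real.sqrt k := Real.sqrt_le_sqrt hkk
    have h2 : Real.sqrt ((n:ℝ) / L^α) = Real.sqrt n * L ^ (-(α/2)) := by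
      rw [Real.sqrt_div hn0.le, Real.sqrt_eq_rpow (L^α), ← Real.rpow_mul hL0.le,
        Real.rpow_neg hL0.le, ← div_eq_mul_inv, show α * (1/2) = α/2 by ring]
    rwa [h2] at h1
  -- the three term bounds
  have hden : (k:ℝ)*((k:ℝ)/2) ≤ (k:ℝ)*((k:ℝ)-i) :=
    mul_le_mul_of_nonneg_left hs2 hK0.le
  have hT1 : 2*‖x‖^2*(i:ℝ)/((k:ℝ)*((k:ℝ)-i)) ≤ 4 * L^(4+α-β) := by
    have hnum : 2*‖x‖^2*(i:ℝ) ≤ 2*((n:ℝ)*L^(4:ℝ))*((k:ℝ)*δ) := by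
      have := mul_le_mul (mul_le_mul_of_nonneg_left hxn (by norm_num : (0:ℝ) ≤ 2))
        hIδ hI0 (mul_nonneg (by norm_num) (mul_nonneg hn0.le hL4.le))
      linarith
    have hnum0 : (0:ℝ) ≤ 2*((n:ℝ)*L^(4:ℝ))*((k:ℝ)*δ) :=
      mul_nonneg (mul_nonneg (by norm_num) (mul_nonneg hn0.le hL4.le))
        (mul_nonneg hK0.le hδ0.le)
    have hnum0' : (0:ℝ) ≤ 4*((n:ℝ)*(L^(4:ℝ)*δ)) :=
      mul_nonneg (by norm_num) (mul_nonneg hn0.le (mul_nonneg hL4.le hδ0.le))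
    calc 2*‖x‖^2*(i:ℝ)/((k:ℝ)*((k:ℝ)-i))
        ≤ 2*((n:ℝ)*L^(4:ℝ))*((k:ℝ)*δ)/((k:ℝ)*((k:ℝ)/2)) :=
          div_le_div₀ hnum0 hnum (mul_pos hK0 (half_pos hK0)) hden
      _ = 4*((n:ℝ)*(L^(4:ℝ)*δ))/(k:ℝ) := by field_simp; ring
      _ ≤ 4*((n:ℝ)*(L^(4:ℝ)*δ))/((n:ℝ)/L^α) := by
          apply div_le_div_of_nonneg_left hnum0' (div_pos hn0 hLα) hkk
      _ = 4 * L^(4+α-β) := by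
          rw [hδdef, show (4:ℝ)+α-β = 4+α+(-β) by ring, Real.rpow_add hL0,
            Real.rpow_add hL0]
          field_simp
  have hT2 : 4*|(inner ℝ x z : ℝ)|/((k:ℝ)-i) ≤ 8 * L^(2+γ+α/2-β/2) := by
    have hzb : ‖z‖ ≤ (Real.sqrt k * L^(-β/2)) * L^γ :=
      hz.trans (mul_le_mul_of_nonneg_right hsqrti hLγ.le)
    have hp : |(inner ℝ x z : ℝ)| ≤ ‖x‖ * ‖z‖ := abs_real_inner_le_norm x z
    have hnum : 4*|(inner ℝ x z : ℝ)| ≤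
        4*((Real.sqrt n * L^(2:ℝ))*((Real.sqrt k * L^(-β/2))*L^γ)) := by
      have := hp.trans (mul_le_mul hx2 hzb (norm_nonneg _)
        (mul_nonneg hsn0.le hL2'.le))
      linarith
    have hnum0 : (0:ℝ) ≤ 4*((Real.sqrt n * L^(2:ℝ))*((Real.sqrt k * L^(-β/2))*L^γ)) :=
      mul_nonneg (by norm_num) (mul_nonneg (mul_nonneg hsn0.le hL2'.le)
        (mul_nonneg (mul_nonneg hS0.le hLβ2.le) hLγ.le))
    have step1 : 4*|(inner ℝ x z : ℝ)|/((k:ℝ)-i)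
        ≤ 4*((Real.sqrt n * L^(2:ℝ))*((Real.sqrt k * L^(-β/2))*L^γ))/((k:ℝ)/2) :=
      div_le_div₀ hnum0 hnum (half_pos hK0) hs2
    have hkS : (k:ℝ) = Real.sqrt k * Real.sqrt k := (Real.mul_self_sqrt hK0.le).symm
    have hC0 : (0:ℝ) < L^(2:ℝ)*L^(-β/2)*L^γ := mul_pos (mul_pos hL2' hLβ2) hLγ
    have step2 : 4*((Real.sqrt n * L^(2:ℝ))*((Real.sqrt k * L^(-β/2))*L^γ))/((k:ℝ)/2)
        = 8*(Real.sqrt n*(L^(2:ℝ)*L^(-β/2)*L^γ))/Real.sqrt k := by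
      rw [div_eq_div_iff (half_pos hK0).ne' hS0.ne']
      linear_combination (4*Real.sqrt (n:ℝ)*L^(2:ℝ)*L^(-β/2)*L^γ) *
        Real.mul_self_sqrt hK0.le
    have step3 : 8*(Real.sqrt n*(L^(2:ℝ)*L^(-β/2)*L^γ))/Real.sqrt k
        ≤ 8*(Real.sqrt n*(L^(2:ℝ)*L^(-β/2)*L^γ))/(Real.sqrt n * L^(-(α/2))) :=
      div_le_div_of_nonneg_left
        (mul_nonneg (by norm_num) (mul_nonneg hsn0.le hC0.le))
        (mul_pos hsn0 hLα2) hsqrtk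
    have hαcancel : L^(α/2)*L^(-(α/2)) = 1 := by
      rw [← Real.rpow_add hL0]; simp
    have hsplit : L^(2+γ+α/2-β/2) = L^(2:ℝ)*L^(-β/2)*L^γ*L^(α/2) := by
      rw [← Real.rpow_add hL0, ← Real.rpow_add hL0, ← Real.rpow_add hL0]
      congr 1; ring
    have step4 : 8*(Real.sqrt n*(L^(2:ℝ)*L^(-β/2)*L^γ))/(Real.sqrt n * L^(-(α/2)))
        = 8 * L^(2+γ+α/2-β/2) := by
      rw [div_eq_iff (mul_pos hsn0 hLα2).ne', hsplit]
      linear_combination (-(8*Real.sqrt (n:ℝ)*(L^(2:ℝ)*L^(-β/2)*L^γ))) * hαcancel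
    calc 4*|(inner ℝ x z : ℝ)|/((k:ℝ)-i)
        ≤ 4*((Real.sqrt n * L^(2:ℝ))*((Real.sqrt k * L^(-β/2))*L^γ))/((k:ℝ)/2) := step1
      _ = 8*(Real.sqrt n*(L^(2:ℝ)*L^(-β/2)*L^γ))/Real.sqrt k := step2
      _ ≤ 8*(Real.sqrt n*(L^(2:ℝ)*L^(-β/2)*L^γ))/(Real.sqrt n * L^(-(α/2))) := step3
      _ = 8 * L^(2+γ+α/2-β/2) := step4
  have hT3 : 2*‖z‖^2/((k:ℝ)-i) ≤ 4 * L^(2*γ-β) := by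
    have hnum : 2*‖z‖^2 ≤ 2*(((k:ℝ)*δ)*L^(2*γ)) := by
      have h1 : ‖z‖^2 ≤ ((k:ℝ)*δ)*L^(2*γ) :=
        hzn.trans (mul_le_mul_of_nonneg_right hIδ hL2γ.le)
      linarith
    have hnum0 : (0:ℝ) ≤ 2*(((k:ℝ)*δ)*L^(2*γ)) :=
      mul_nonneg (by norm_num) (mul_nonneg (mul_nonneg hK0.le hδ0.le) hL2γ.le)
    calc 2*‖z‖^2/((k:ℝ)-i) ≤ 2*(((k:ℝ)*δ)*L^(2*γ))/((k:ℝ)/2) :=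
          div_le_div₀ hnum0 hnum (half_pos hK0) hs2
      _ = 4*(δ*L^(2*γ)) := by field_simp; ring
      _ = 4 * L^(2*γ-β) := by
          rw [hδdef, ← Real.rpow_add hL0]; congr 1; ring
  -- bound on the exponent
  have hnormsub : ‖x - z‖^2 = ‖x‖^2 - 2 * (inner ℝ x z : ℝ) + ‖z‖^2 := norm_sub_sq_real x z
  set E : ℝ := 2*‖x‖^2/(k:ℝ) - 2*‖x-z‖^2/((k:ℝ)-i) with hEdef
  have hEeq : E = -(2*‖x‖^2*(i:ℝ)/((k:ℝ)*((k:ℝ)-i))) + 4*(inner ℝ x z : ℝ)/((k:ℝ)-i)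
      - 2*‖z‖^2/((k:ℝ)-i) := by
    rw [hEdef, hnormsub]; field_simp; ring
  set η : ℝ := min (1/2 : ℝ) (ε/4) with hηdef
  have hηhalf : η ≤ 1/2 := min_le_left _ _
  have hηε : η ≤ ε/4 := min_le_right _ _
  have hη0 : 0 < η := hmin0
  have hsum : 4*L^(4+α-β) + 8*L^(2+γ+α/2-β/2) + 4*L^(2*γ-β) ≤ η := by
    have : (16:ℝ)*m = η := by rw [hm]; ring
    linarith
  have habs4p : |4*(inner ℝ x z : ℝ)/((k:ℝ)-i)| ≤ 8 * L^(2+γ+α/2-β/2) := by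
    rw [abs_div, abs_of_pos hs0, abs_mul,
      abs_of_nonneg (by norm_num : (0:ℝ) ≤ 4)]
    exact hT2
  have hu0 : 0 ≤ 2*‖x‖^2*(i:ℝ)/((k:ℝ)*((k:ℝ)-i)) :=
    div_nonneg (by positivity) (mul_pos hK0 hs0).le
  have hw0 : 0 ≤ 2*‖z‖^2/((k:ℝ)-i) := div_nonneg (by positivity) hs0.le
  have habsE : |E| ≤ η := by
    obtain ⟨hl, hr⟩ := abs_le.1 habs4p
    rw [hEeq]
    rw [abs_le]
    constructor <;> linarith [hT1, hT3, hu0, hw0, hsum]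
  -- final combination
  rw [gaussKer_ratio_eq (k:ℝ) (i:ℝ) hK0.ne' hs0.ne' x z, ← hEdef]
  have hP1 : 1 ≤ (k:ℝ)/((k:ℝ)-i) := (one_le_div hs0).2 (by linarith)
  have hPb : (k:ℝ)/((k:ℝ)-i) ≤ 1 + 2*δ := by
    rw [div_le_iff₀ hs0]
    have hh1 : (i:ℝ)*(1+2*δ) ≤ ((k:ℝ)*δ)*(1+2*δ) :=
      mul_le_mul_of_nonneg_right hIδ (by linarith)
    have hh2 : (0:ℝ) ≤ ((k:ℝ)*δ)*(1-2*δ) :=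
      mul_nonneg (mul_nonneg hK0.le hδ0.le) (by linarith)
    linarith [hh1, hh2]
  have hP1' : (1:ℝ) ≤ ((k:ℝ)/((k:ℝ)-i))^2 := by
    have := pow_le_pow_left₀ (by norm_num : (0:ℝ) ≤ 1) hP1 2
    simpa using this
  have hP2 : ((k:ℝ)/((k:ℝ)-i))^2 ≤ 1 + 6*δ := by
    have hq0 : (0:ℝ) ≤ (k:ℝ)/((k:ℝ)-i) := by linarith
    have hsq := pow_le_pow_left₀ hq0 hPb 2
    have hexp2 : (1+2*δ)^2 = 1+4*δ+4*(δ*δ) := by ring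
    have hδδ : δ*δ ≤ δ*(1/2) := mul_le_mul_of_nonneg_left hδhalf hδ0.le
    linarith
  obtain ⟨hE1, hE2⟩ := abs_le.1 habsE
  have hexp_up : Real.exp E ≤ 1 + 2*η := by
    have h1 : Real.exp E ≤ Real.exp η := Real.exp_le_exp.2 hE2
    have h3 := Real.add_one_le_exp (-η)
    rw [Real.exp_neg] at h3
    have h4 : 0 < 1 - η := by linarith
    have h5 : Real.exp η * (1 - η) ≤ 1 := by
      have h6 := mul_le_mul_of_nonneg_left h3 (Real.exp_pos η).le
      rw [mul_inv_cancel₀ (Real.exp_pos η).ne'] at h6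
      calc Real.exp η * (1 - η) = Real.exp η * (-η + 1) := by ring
        _ ≤ 1 := h6
    have h9 : η*η ≤ η*(1/2) := mul_le_mul_of_nonneg_left hηhalf hη0.le
    have hexp2 : (1+2*η)*(1-η) = 1+η-2*(η*η) := by ring
    have h10 : Real.exp η*(1-η) ≤ (1+2*η)*(1-η) := by linarith
    have h11 : Real.exp η ≤ 1+2*η := le_of_mul_le_mul_right
      (by linarith [h10] : Real.exp η * (1-η) ≤ (1+2*η)*(1-η)) h4
    linarith
  have hexp_lo : 1 - η ≤ Real.exp E := by
    have h1 := Real.add_one_le_exp (-η)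
    have h2 : Real.exp (-η) ≤ Real.exp E := Real.exp_le_exp.2 hE1
    linarith
  rw [abs_le]
  constructor
  · have hlow : 1*(1 - η) ≤ ((k:ℝ)/((k:ℝ)-i))^2 * Real.exp E :=
      mul_le_mul hP1' hexp_lo (by linarith) (by positivity)
    have : 1*(1-η) = 1-η := one_mul _
    linarith
  · have hup : ((k:ℝ)/((k:ℝ)-i))^2 * Real.exp E ≤ (1 + 6*δ)*(1 + 2*η) :=
      mul_le_mul hP2 hexp_up (Real.exp_pos E).le (by linarith)
    have hδη : δ*η ≤ (ε/24)*(1/2) :=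
      mul_le_mul hδε hηhalf hη0.le (by linarith)
    have hexpand : (1 + 6*δ)*(1 + 2*η) = 1 + 6*δ + 2*η + 12*(δ*η) := by ring
    linarith
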